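/- The generalised Schur complement map on positive semidefinite block matrices, f(Q) = Q_A − Q_C Q_B† Q_Cᵀ (where Q has blocks Q_A, Q_C; Q_Cᵀ, Q_B and † denotes the Moore–Penrose pseudoinverse), is matrix concave: for positive semidefinite Q₁, Q₂ and λ ∈ [0,1], f(λ Q₁ + (1−λ) Q₂) ⪰ λ f(Q₁) + (1−λ) f(Q₂) in the Loewner order. -/

import Mathlib

open Matrix

/-- `B` is the Moore–Penrose pseudoinverse of `A` (the four Penrose conditions). -/
def IsMoorePenrose {m n : Type*} [Fintype m] [Fintype n]
    (A : Matrix m n ℝ) (B : Matrix n m ℝ) : Prop :=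
  A * B * A = A ∧ B * A * B = B ∧ (A * B)ᵀ = A * B ∧ (B * A)ᵀ = B * A

namespace SchurAux

variable {q : ℕ}

/-- Uniqueness of the Moore–Penrose pseudoinverse. -/
lemma mp_unique {A B C : Matrix (Fin q) (Fin q) ℝ}
    (hB : IsMoorePenrose A B) (hC : IsMoorePenrose A C) : B = C := by
  obtain ⟨hB1, hB2, hB3, hB4⟩ := hB
  obtain ⟨hC1, hC2, hC3, hC4⟩ := hC
  have hAB : A * B = A * C := by
    calc A * B = (A * B)ᵀ := hB3.symm
    _ = Bᵀ * Aᵀ := by rw [transpose_mul]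
    _ = Bᵀ * (A * C * A)ᵀ := by rw [hC1]
    _ = Bᵀ * (Aᵀ * (A * C)ᵀ) := by rw [transpose_mul]
    _ = Bᵀ * (Aᵀ * (A * C)) := by rw [hC3]
    _ = (A * B)ᵀ * (A * C) := by rw [transpose_mul]; noncomm_ring
    _ = (A * B) * (A * C) := by rw [hB3]
    _ = (A * B * A) * C := by noncomm_ring
    _ = A * C := by rw [hB1]
  have hAt : Aᵀ = (C * A)ᵀ * Aᵀ := by
    conv_lhs => rw [← hC1, mul_assoc, transpose_mul]
  have hBA : B * A = C * A := by
    calc B * A = (B * A)ᵀ := hB4.symm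
    _ = Aᵀ * Bᵀ := by rw [transpose_mul]
    _ = ((C * A)ᵀ * Aᵀ) * Bᵀ := by rw [← hAt]
    _ = (C * A) * (Aᵀ * Bᵀ) := by rw [hC4, mul_assoc]
    _ = (C * A) * (B * A)ᵀ := by rw [transpose_mul]
    _ = (C * A) * (B * A) := by rw [hB4]
    _ = C * (A * B * A) := by noncomm_ring
    _ = C * A := by rw [hB1]
  calc B = B * A * B := hB2.symm
  _ = C * A * B := by rw [hBA]
  _ = C * (A * B) := by rw [mul_assoc]
  _ = C * (A * C) := by rw [hAB]
  _ = C * A * C := by rw [mul_assoc]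
  _ = C := hC2

/-- The pseudoinverse of a symmetric matrix is symmetric. -/
lemma mp_symm {A B : Matrix (Fin q) (Fin q) ℝ} (hA : Aᵀ = A)
    (h : IsMoorePenrose A B) : Bᵀ = B := by
  obtain ⟨h1, h2, h3, h4⟩ := h
  refine mp_unique ?_ ⟨h1, h2, h3, h4⟩
  refine ⟨?_, ?_, ?_, ?_⟩
  · calc A * Bᵀ * A = (Aᵀ * B * Aᵀ)ᵀ := by simp [transpose_mul, Matrix.mul_assoc]
    _ = A := by rw [hA, h1, hA]
  · calc Bᵀ * A * Bᵀ = (B * Aᵀ * B)ᵀ := by simp [transpose_mul, Matrix.mul_assoc]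
    _ = Bᵀ := by rw [hA, h2]
  · calc (A * Bᵀ)ᵀ = B * Aᵀ := by simp [transpose_mul]
    _ = B * A := by rw [hA]
    _ = (B * A)ᵀ := h4.symm
    _ = Aᵀ * Bᵀ := by rw [transpose_mul]
    _ = A * Bᵀ := by rw [hA]
  · calc (Bᵀ * A)ᵀ = Aᵀ * B := by simp [transpose_mul]
    _ = A * B := by rw [hA]
    _ = (A * B)ᵀ := h3.symm
    _ = Bᵀ * Aᵀ := by rw [transpose_mul]
    _ = Bᵀ * A := by rw [hA]

/-- Range condition: for a PSD block matrix, `B * QB * QCᵀ = QCᵀ`. -/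
lemma range_cond {p : ℕ} {QA : Matrix (Fin p) (Fin p) ℝ}
    {QC : Matrix (Fin p) (Fin q) ℝ} {QB B : Matrix (Fin q) (Fin q) ℝ}
    (h : (Matrix.fromBlocks QA QC QCᵀ QB).PosSemidef)
    (hB : IsMoorePenrose QB B) : B * QB * QCᵀ = QCᵀ := by
  obtain ⟨M, hM⟩ : ∃ M : Matrix (Fin p ⊕ Fin q) (Fin p ⊕ Fin q) ℝ,
      Matrix.fromBlocks QA QC QCᵀ QB = Mᴴ * M := by
    open scoped MatrixOrder in
    exact CStarAlgebra.nonneg_iff_eq_star_mul_self.mp (nonneg_iff_posSemidef.mpr h)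
  have hQB : QB = (M.submatrix id Sum.inr)ᵀ * (M.submatrix id Sum.inr) := by
    ext i j
    have := congrFun (congrFun hM (Sum.inr i)) (Sum.inr j)
    simpa [Matrix.mul_apply, Matrix.submatrix_apply] using this
  have hQC : QCᵀ = (M.submatrix id Sum.inr)ᵀ * (M.submatrix id Sum.inl) := by
    ext i j
    have := congrFun (congrFun hM (Sum.inr i)) (Sum.inl j)
    simpa [Matrix.mul_apply, Matrix.submatrix_apply] using this
  set N : Matrix (Fin p ⊕ Fin q) (Fin q) ℝ := M.submatrix id Sum.inr
  set L : Matrix (Fin p ⊕ Fin q) (Fin p) ℝ := M.submatrix id Sum.inl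
  have hQBP : QB * (B * QB) = QB := by rw [← mul_assoc, hB.1]
  have hZ : N - N * (B * QB) = 0 := by
    rw [← conjTranspose_mul_self_eq_zero]
    have expand : (N - N * (B * QB))ᴴ * (N - N * (B * QB))
        = (Nᵀ * N) - (Nᵀ * N) * (B * QB) - (B * QB)ᵀ * (Nᵀ * N)
          + (B * QB)ᵀ * ((Nᵀ * N) * (B * QB)) := by
      show (N - N * (B * QB))ᵀ * (N - N * (B * QB)) = _
      simp only [transpose_sub, transpose_mul, Matrix.sub_mul, Matrix.mul_sub,
        Matrix.mul_assoc]
      abel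
    rw [expand, ← hQB, hQBP]
    abel
  have hM2 : N = N * (B * QB) := sub_eq_zero.mp hZ
  have hPM : (B * QB) * Nᵀ = Nᵀ := by
    calc (B * QB) * Nᵀ = (B * QB)ᵀ * Nᵀ := by rw [hB.2.2.2]
    _ = (N * (B * QB))ᵀ := (transpose_mul _ _).symm
    _ = Nᵀ := by rw [← hM2]
  rw [hQC, ← Matrix.mul_assoc, hPM]

/-- PSD is preserved by nonnegative scalar multiplication. -/
lemma psd_smul {n : ℕ} {A : Matrix (Fin n) (Fin n) ℝ} (hA : A.PosSemidef)
    {c : ℝ} (hc : 0 ≤ c) : (c • A).PosSemidef := by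
  refine ⟨?_, fun x => ?_⟩
  · show (c • A)ᴴ = c • A
    rw [conjTranspose_smul]
    congr 1
    exact hA.1.eq
  · exact (hA.smul hc).2 x

/-- The sandwich identity used for the variational characterisation. -/
lemma sandwich {p : ℕ} {QC : Matrix (Fin p) (Fin q) ℝ} {QB B : Matrix (Fin q) (Fin q) ℝ}
    (hQBs : QBᵀ = QB) (hB : IsMoorePenrose QB B) (hBs : Bᵀ = B)
    (hr : B * QB * QCᵀ = QCᵀ) (X : Matrix (Fin p) (Fin q) ℝ) :
    (X - QC * B) * QB * (X - QC * B)ᵀ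
      = X * QB * Xᵀ - X * QCᵀ - QC * Xᵀ + QC * B * QCᵀ := by
  have hcomm : QB * B = B * QB := by
    calc QB * B = QBᵀ * Bᵀ := by rw [hQBs, hBs]
    _ = (B * QB)ᵀ := (transpose_mul _ _).symm
    _ = B * QB := hB.2.2.2
  have hf1 : QB * (Bᵀ * QCᵀ) = QCᵀ := by
    rw [hBs, ← Matrix.mul_assoc, hcomm]; exact hr
  have hf2 : QC * B * QB = QC := by
    calc QC * B * QB = QC * (B * QB) := Matrix.mul_assoc _ _ _
    _ = QC * (B * QB)ᵀ := by rw [hB.2.2.2]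
    _ = (B * QB * QCᵀ)ᵀ := by rw [transpose_mul (B * QB) QCᵀ, transpose_transpose]
    _ = QCᵀᵀ := by rw [hr]
    _ = QC := transpose_transpose QC
  calc (X - QC * B) * QB * (X - QC * B)ᵀ
      = (X * QB - QC * B * QB) * (Xᵀ - Bᵀ * QCᵀ) := by
        rw [transpose_sub, transpose_mul, Matrix.sub_mul]
  _ = (X * QB - QC) * (Xᵀ - Bᵀ * QCᵀ) := by rw [hf2]
  _ = X * QB * Xᵀ - X * (QB * (Bᵀ * QCᵀ)) - QC * Xᵀ + QC * (Bᵀ * QCᵀ) := by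
        simp only [Matrix.sub_mul, Matrix.mul_sub, Matrix.mul_assoc]
        abel
  _ = X * QB * Xᵀ - X * QCᵀ - QC * Xᵀ + QC * (Bᵀ * QCᵀ) := by rw [hf1]
  _ = X * QB * Xᵀ - X * QCᵀ - QC * Xᵀ + QC * B * QCᵀ := by
        rw [hBs, ← Matrix.mul_assoc]

end SchurAux

open SchurAux in
/-- Matrix concavity of the generalised Schur complement
`f(Q) = Q_A − Q_C Q_B† Q_Cᵀ` on positive semidefinite block matrices. -/
theorem schurComplement_matrix_concave {p q : ℕ}
    (QA₁ QA₂ : Matrix (Fin p) (Fin p) ℝ)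
    (QC₁ QC₂ : Matrix (Fin p) (Fin q) ℝ)
    (QB₁ QB₂ : Matrix (Fin q) (Fin q) ℝ)
    (B₁ B₂ Bl : Matrix (Fin q) (Fin q) ℝ)
    (l : ℝ) (hl : l ∈ Set.Icc (0 : ℝ) 1)
    (h₁ : (Matrix.fromBlocks QA₁ QC₁ QC₁ᵀ QB₁).PosSemidef)
    (h₂ : (Matrix.fromBlocks QA₂ QC₂ QC₂ᵀ QB₂).PosSemidef)
    (hB₁ : IsMoorePenrose QB₁ B₁) (hB₂ : IsMoorePenrose QB₂ B₂)
    (hBl : IsMoorePenrose (l • QB₁ + (1 - l) • QB₂) Bl) :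
    ((l • QA₁ + (1 - l) • QA₂ -
        (l • QC₁ + (1 - l) • QC₂) * Bl * (l • QC₁ + (1 - l) • QC₂)ᵀ) -
      (l • (QA₁ - QC₁ * B₁ * QC₁ᵀ) + (1 - l) • (QA₂ - QC₂ * B₂ * QC₂ᵀ))).PosSemidef := by
  obtain ⟨hl0, hl1⟩ := hl
  have hl1' : (0:ℝ) ≤ 1 - l := by linarith
  -- PSD and symmetry of the B-blocks
  have e₁ : (Matrix.fromBlocks QA₁ QC₁ QC₁ᵀ QB₁).submatrix Sum.inr Sum.inr = QB₁ := by
    ext i j; simp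
  have e₂ : (Matrix.fromBlocks QA₂ QC₂ QC₂ᵀ QB₂).submatrix Sum.inr Sum.inr = QB₂ := by
    ext i j; simp
  have hQB₁psd : QB₁.PosSemidef := e₁ ▸ h₁.submatrix Sum.inr
  have hQB₂psd : QB₂.PosSemidef := e₂ ▸ h₂.submatrix Sum.inr
  have hQB₁s : QB₁ᵀ = QB₁ := hQB₁psd.isHermitian
  have hQB₂s : QB₂ᵀ = QB₂ := hQB₂psd.isHermitian
  have hQBls : (l • QB₁ + (1 - l) • QB₂)ᵀ = l • QB₁ + (1 - l) • QB₂ := by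
    rw [transpose_add, transpose_smul, transpose_smul, hQB₁s, hQB₂s]
  have hB₁s : B₁ᵀ = B₁ := mp_symm hQB₁s hB₁
  have hB₂s : B₂ᵀ = B₂ := mp_symm hQB₂s hB₂
  have hBls : Blᵀ = Bl := mp_symm hQBls hBl
  -- range conditions
  have hr₁ : B₁ * QB₁ * QC₁ᵀ = QC₁ᵀ := range_cond h₁ hB₁
  have hr₂ : B₂ * QB₂ * QC₂ᵀ = QC₂ᵀ := range_cond h₂ hB₂
  -- abbreviation (as a plain term, no `set`)
  -- X := (l • QC₁ + (1 - l) • QC₂) * Bl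
  -- sandwich identities
  have hs₁ := sandwich hQB₁s hB₁ hB₁s hr₁ ((l • QC₁ + (1 - l) • QC₂) * Bl)
  have hs₂ := sandwich hQB₂s hB₂ hB₂s hr₂ ((l • QC₁ + (1 - l) • QC₂) * Bl)
  -- the three averaging identities
  have hsum1 : l • (((l • QC₁ + (1 - l) • QC₂) * Bl) * QB₁ * ((l • QC₁ + (1 - l) • QC₂) * Bl)ᵀ)
      + (1 - l) • (((l • QC₁ + (1 - l) • QC₂) * Bl) * QB₂ * ((l • QC₁ + (1 - l) • QC₂) * Bl)ᵀ)
      = (l • QC₁ + (1 - l) • QC₂) * Bl * (l • QC₁ + (1 - l) • QC₂)ᵀ := by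
    have step1 : l • (((l • QC₁ + (1 - l) • QC₂) * Bl) * QB₁ * ((l • QC₁ + (1 - l) • QC₂) * Bl)ᵀ)
        + (1 - l) • (((l • QC₁ + (1 - l) • QC₂) * Bl) * QB₂ * ((l • QC₁ + (1 - l) • QC₂) * Bl)ᵀ)
        = ((l • QC₁ + (1 - l) • QC₂) * Bl) * (l • QB₁ + (1 - l) • QB₂)
          * ((l • QC₁ + (1 - l) • QC₂) * Bl)ᵀ := by
      simp only [Matrix.mul_add, Matrix.add_mul, Matrix.mul_smul, Matrix.smul_mul]
    rw [step1]
    calc ((l • QC₁ + (1 - l) • QC₂) * Bl) * (l • QB₁ + (1 - l) • QB₂)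
          * ((l • QC₁ + (1 - l) • QC₂) * Bl)ᵀ
        = ((l • QC₁ + (1 - l) • QC₂) * Bl) * (l • QB₁ + (1 - l) • QB₂)
          * (Blᵀ * (l • QC₁ + (1 - l) • QC₂)ᵀ) := by rw [transpose_mul]
    _ = ((l • QC₁ + (1 - l) • QC₂) * Bl) * (l • QB₁ + (1 - l) • QB₂)
          * (Bl * (l • QC₁ + (1 - l) • QC₂)ᵀ) := by rw [hBls]
    _ = (l • QC₁ + (1 - l) • QC₂) * (Bl * (l • QB₁ + (1 - l) • QB₂) * Bl)
          * (l • QC₁ + (1 - l) • QC₂)ᵀ := by simp only [Matrix.mul_assoc]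
    _ = (l • QC₁ + (1 - l) • QC₂) * Bl * (l • QC₁ + (1 - l) • QC₂)ᵀ := by rw [hBl.2.1]
  have hsum2 : l • (((l • QC₁ + (1 - l) • QC₂) * Bl) * QC₁ᵀ)
      + (1 - l) • (((l • QC₁ + (1 - l) • QC₂) * Bl) * QC₂ᵀ)
      = (l • QC₁ + (1 - l) • QC₂) * Bl * (l • QC₁ + (1 - l) • QC₂)ᵀ := by
    rw [transpose_add, transpose_smul, transpose_smul]
    simp only [Matrix.mul_add, Matrix.mul_smul]
  have hsum3 : l • (QC₁ * ((l • QC₁ + (1 - l) • QC₂) * Bl)ᵀ)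
      + (1 - l) • (QC₂ * ((l • QC₁ + (1 - l) • QC₂) * Bl)ᵀ)
      = (l • QC₁ + (1 - l) • QC₂) * Bl * (l • QC₁ + (1 - l) • QC₂)ᵀ := by
    have step1 : l • (QC₁ * ((l • QC₁ + (1 - l) • QC₂) * Bl)ᵀ)
        + (1 - l) • (QC₂ * ((l • QC₁ + (1 - l) • QC₂) * Bl)ᵀ)
        = (l • QC₁ + (1 - l) • QC₂) * ((l • QC₁ + (1 - l) • QC₂) * Bl)ᵀ := by
      simp only [Matrix.add_mul, Matrix.smul_mul]
    rw [step1, transpose_mul, hBls, ← Matrix.mul_assoc]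
  -- the main algebraic identity
  have key : (l • QA₁ + (1 - l) • QA₂ -
        (l • QC₁ + (1 - l) • QC₂) * Bl * (l • QC₁ + (1 - l) • QC₂)ᵀ) -
      (l • (QA₁ - QC₁ * B₁ * QC₁ᵀ) + (1 - l) • (QA₂ - QC₂ * B₂ * QC₂ᵀ))
      = l • ((((l • QC₁ + (1 - l) • QC₂) * Bl) - QC₁ * B₁) * QB₁
              * (((l • QC₁ + (1 - l) • QC₂) * Bl) - QC₁ * B₁)ᵀ)
        + (1 - l) • ((((l • QC₁ + (1 - l) • QC₂) * Bl) - QC₂ * B₂) * QB₂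
              * (((l • QC₁ + (1 - l) • QC₂) * Bl) - QC₂ * B₂)ᵀ) := by
    rw [hs₁, hs₂]
    rw [show ∀ (W₁ W₂ Y₁ Y₂ Z₁ Z₂ S₁ S₂ : Matrix (Fin p) (Fin p) ℝ),
        l • (W₁ - Y₁ - Z₁ + S₁) + (1 - l) • (W₂ - Y₂ - Z₂ + S₂)
        = (l • W₁ + (1 - l) • W₂) - (l • Y₁ + (1 - l) • Y₂) - (l • Z₁ + (1 - l) • Z₂)
          + (l • S₁ + (1 - l) • S₂) from fun _ _ _ _ _ _ _ _ => by module]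
    rw [hsum1, hsum2, hsum3]
    module
  rw [key]
  have hD₁ : ((((l • QC₁ + (1 - l) • QC₂) * Bl) - QC₁ * B₁) * QB₁
      * (((l • QC₁ + (1 - l) • QC₂) * Bl) - QC₁ * B₁)ᵀ).PosSemidef :=
    hQB₁psd.mul_mul_conjTranspose_same _
  have hD₂ : ((((l • QC₁ + (1 - l) • QC₂) * Bl) - QC₂ * B₂) * QB₂
      * (((l • QC₁ + (1 - l) • QC₂) * Bl) - QC₂ * B₂)ᵀ).PosSemidef :=
    hQB₂psd.mul_mul_conjTranspose_same _
  exact (psd_smul hD₁ hl0).add (psd_smul hD₂ hl1')
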